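/- Let C_0, …, C_{p−1} be d×d complex matrices that are simultaneously triangularizable, i.e. there exists an invertible d×d matrix Q such that T_k := Q^{-1} C_k Q is upper triangular for every k = 0, …, p−1. Let M be the companion block matrix of C_0, …, C_{p−1}. Then for every λ ∈ ℂ, det(M − λ·I_{pd}) = (−1)^{pd} · ∏_{j=1}^d ( λ^p − ∑_{k=0}^{p−1} λ^k · (T_k)_{jj} ). -/

import Mathlib

/-- The companion block matrix of `d×d` matrices `C 0, …, C (p-1)`: the `pd×pd`
block matrix with identity blocks `I_d` on the block superdiagonal, bottom block
row `(C 0, C 1, …, C (p-1))`, and zero blocks elsewhere. -/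
def companion {p d : ℕ} {R : Type*} [CommRing R]
    (C : Fin p → Matrix (Fin d) (Fin d) R) :
    Matrix (Fin p × Fin d) (Fin p × Fin d) R :=
  Matrix.of fun x y =>
    if (x.1 : ℕ) + 1 = p then (C y.1) x.2 y.2
    else if (y.1 : ℕ) = (x.1 : ℕ) + 1 then (if x.2 = y.2 then 1 else 0) else 0

open Matrix Finset Kronecker Equiv

namespace Stmt5Aux

/-- equivalence between a block and `Fin d` -/
def blockEquiv {p d : ℕ} (i : Fin p) : {x : Fin p × Fin d // x.1 = i} ≃ Fin d where
  toFun x := x.1.2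
  invFun a := ⟨(i, a), rfl⟩
  left_inv := by rintro ⟨⟨i', a⟩, rfl⟩; rfl
  right_inv := fun a => rfl

lemma conj_companion {p d : ℕ} (C : Fin p → Matrix (Fin d) (Fin d) ℂ)
    (Q : Matrix (Fin d) (Fin d) ℂ) (hQ : Q⁻¹ * Q = 1) :
    ((1 : Matrix (Fin p) (Fin p) ℂ) ⊗ₖ Q⁻¹) * companion C *
        ((1 : Matrix (Fin p) (Fin p) ℂ) ⊗ₖ Q)
      = companion (fun k => Q⁻¹ * C k * Q) := by
  ext ⟨i, a⟩ ⟨j, b⟩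
  have h1 : ∀ (l : Fin p) (e : Fin d),
      (((1 : Matrix (Fin p) (Fin p) ℂ) ⊗ₖ Q⁻¹) * companion C) (i, a) (l, e)
        = ∑ c : Fin d, Q⁻¹ a c * companion C (i, c) (l, e) := by
    intro l e
    rw [Matrix.mul_apply, Fintype.sum_prod_type]
    rw [Finset.sum_eq_single i]
    · simp [kroneckerMap_apply]
    · intro k _ hk
      simp [kroneckerMap_apply, one_apply, Ne.symm hk]
    · simp
  rw [Matrix.mul_apply, Fintype.sum_prod_type]
  rw [Finset.sum_eq_single j]
  · simp only [kroneckerMap_apply, one_apply_eq, one_mul, h1]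
    by_cases hip : (i : ℕ) + 1 = p
    · simp only [companion, of_apply, hip, if_true]
      rw [show (Q⁻¹ * C j * Q) a b = ∑ e, (∑ c, Q⁻¹ a c * C j c e) * Q e b by
        simp [Matrix.mul_apply]]
    · by_cases hji : (j : ℕ) = (i : ℕ) + 1
      · simp only [companion, of_apply, hip, if_false, hji, if_true]
        have : ∀ e : Fin d, (∑ c, Q⁻¹ a c * if c = e then (1:ℂ) else 0) = Q⁻¹ a e := by
          intro e; simp [mul_ite]
        simp only [this]
        have := congrFun (congrFun hQ a) b
        rw [Matrix.mul_apply] at this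
        rw [this, one_apply]
      · simp [companion, hip, hji]
  · intro l _ hl
    simp [kroneckerMap_apply, one_apply, hl, Ne.symm hl]
  · simp


/-- main determinant computation, for arbitrary block entries -/
lemma det_aux {n d : ℕ} (lam : ℂ) (T : Fin (n + 1) → Matrix (Fin d) (Fin d) ℂ) :
    (lam • (1 : Matrix (Fin (n+1) × Fin d) (Fin (n+1) × Fin d) ℂ) - companion T).det
      = (lam ^ (n+1) • (1 : Matrix (Fin d) (Fin d) ℂ) - ∑ k : Fin (n+1), lam ^ (k : ℕ) • T k).det := by
  set N : Matrix (Fin (n+1) × Fin d) (Fin (n+1) × Fin d) ℂ := lam • 1 - companion T with hN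
  set D : Matrix (Fin d) (Fin d) ℂ :=
    lam ^ (n+1) • 1 - ∑ k : Fin (n+1), lam ^ (k : ℕ) • T k with hD
  set B : ℕ → Matrix (Fin d) (Fin d) ℂ := fun j =>
    lam ^ (n - j) • 1
      - ∑ k : Fin (n+1), if j < (k : ℕ) then lam ^ ((k : ℕ) - j - 1) • T k else 0 with hB
  have hBapp : ∀ (j : ℕ) (a b : Fin d), B j a b
      = lam ^ (n - j) * (if a = b then 1 else 0)
        - ∑ k : Fin (n+1), if j < (k : ℕ) then lam ^ ((k : ℕ) - j - 1) * T k a b else 0 := by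
    intro j a b
    simp only [hB, Matrix.sub_apply, Matrix.smul_apply, Matrix.sum_apply, Matrix.one_apply,
      smul_eq_mul]
    congr 1
    refine Finset.sum_congr rfl fun k _ => ?_
    rw [apply_ite (fun M : Matrix (Fin d) (Fin d) ℂ => M a b)]
    simp
  have hBn : ∀ a b : Fin d, B n a b = if a = b then 1 else 0 := by
    intro a b
    rw [hBapp, Nat.sub_self, pow_zero, one_mul]
    rw [Finset.sum_eq_zero, sub_zero]
    intro k _
    rw [if_neg (by have := k.isLt; omega)]
  have hD0 : ∀ a b : Fin d, lam * B 0 a b - T 0 a b = D a b := by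
    intro a b
    have hDab : D a b = lam ^ (n+1) * (if a = b then 1 else 0)
        - ∑ k : Fin (n+1), lam ^ (k : ℕ) * T k a b := by
      simp [hD, Matrix.sub_apply, Matrix.smul_apply, Matrix.sum_apply, Matrix.one_apply]
    rw [hDab, hBapp, mul_sub, Finset.mul_sum]
    have h1 : lam * (lam ^ (n - 0) * (if a = b then (1:ℂ) else 0))
        = lam ^ (n+1) * (if a = b then 1 else 0) := by
      rw [Nat.sub_zero, ← mul_assoc, ← pow_succ']
    rw [h1]
    have h2 : ∀ k : Fin (n+1),
        lam * (if 0 < (k : ℕ) then lam ^ ((k : ℕ) - 0 - 1) * T k a b else 0)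
          = lam ^ (k : ℕ) * T k a b - (if (k : ℕ) = 0 then T k a b else 0) := by
      intro k
      rcases Nat.eq_zero_or_pos (k : ℕ) with h | h
      · rw [if_neg (by omega), if_pos h, h, pow_zero, one_mul, mul_zero]
        ring
      · rw [if_pos h, if_neg (by omega), sub_zero, ← mul_assoc, ← pow_succ',
          show (k : ℕ) - 0 - 1 + 1 = (k : ℕ) by omega]
    rw [Finset.sum_congr rfl fun k _ => h2 k, Finset.sum_sub_distrib]
    have h3 : ∑ k : Fin (n+1), (if (k : ℕ) = 0 then T k a b else 0) = T 0 a b := by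
      rw [Finset.sum_eq_single (0 : Fin (n+1))]
      · simp
      · intro k _ hk
        exact if_neg (fun h => hk (Fin.val_injective (by simpa using h)))
      · simp
    rw [h3]
    ring
  have hstep : ∀ (j : Fin (n+1)) (a b : Fin d), 0 < (j : ℕ) →
      lam * B (j : ℕ) a b - T j a b - B ((j : ℕ) - 1) a b = 0 := by
    intro j a b hj
    have hjn : (j : ℕ) ≤ n := Nat.lt_succ_iff.mp j.isLt
    rw [hBapp, hBapp, mul_sub, Finset.mul_sum]
    have e1 : lam * (lam ^ (n - (j:ℕ)) * (if a = b then (1:ℂ) else 0))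
        = lam ^ (n - ((j:ℕ) - 1)) * (if a = b then 1 else 0) := by
      rw [← mul_assoc, ← pow_succ', show n - (j:ℕ) + 1 = n - ((j:ℕ) - 1) by omega]
    rw [e1]
    have e2 : ∀ k : Fin (n+1),
        lam * (if (j:ℕ) < (k:ℕ) then lam ^ ((k:ℕ) - (j:ℕ) - 1) * T k a b else 0)
          = (if (j:ℕ) - 1 < (k:ℕ) then lam ^ ((k:ℕ) - ((j:ℕ) - 1) - 1) * T k a b else 0)
            - (if (k:ℕ) = (j:ℕ) then T k a b else 0) := by
      intro k
      rcases lt_trichotomy ((k:ℕ)) ((j:ℕ)) with h | h | h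
      · rw [if_neg (by omega), if_neg (by omega), if_neg (by omega), mul_zero, sub_zero]
      · rw [if_neg (by omega), if_pos (by omega), if_pos h, mul_zero,
          show (k:ℕ) - ((j:ℕ) - 1) - 1 = 0 by omega, pow_zero, one_mul, sub_self]
      · rw [if_pos (by omega), if_pos (by omega), if_neg (by omega), sub_zero,
          ← mul_assoc, ← pow_succ',
          show (k:ℕ) - (j:ℕ) - 1 + 1 = (k:ℕ) - ((j:ℕ) - 1) - 1 by omega]
    rw [Finset.sum_congr rfl fun k _ => e2 k, Finset.sum_sub_distrib]
    have e3 : ∑ k : Fin (n+1), (if (k:ℕ) = (j:ℕ) then T k a b else 0) = T j a b := by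
      rw [Finset.sum_eq_single j]
      · simp
      · intro k _ hk
        exact if_neg (fun h => hk (Fin.val_injective h))
      · simp
    rw [e3]
    ring
  -- the row-operation matrix
  set L : Matrix (Fin (n+1) × Fin d) (Fin (n+1) × Fin d) ℂ :=
    Matrix.of (fun x y => if (x.1 : ℕ) = n then B (y.1 : ℕ) x.2 y.2
      else if x = y then 1 else 0) with hL
  -- the result of the row operations
  set M' : Matrix (Fin (n+1) × Fin d) (Fin (n+1) × Fin d) ℂ :=
    Matrix.of (fun x y => if (x.1 : ℕ) = n then (if (y.1 : ℕ) = 0 then D x.2 y.2 else 0)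
      else N x y) with hM'
  have hNval : ∀ (k j : Fin (n+1)) (c b : Fin d), N (k, c) (j, b)
      = lam * (if (k, c) = (j, b) then 1 else 0)
        - (if (k : ℕ) + 1 = n + 1 then T j c b
           else if (j : ℕ) = (k : ℕ) + 1 then (if c = b then (1:ℂ) else 0) else 0) := by
    intro k j c b
    simp [hN, Matrix.sub_apply, Matrix.smul_apply, Matrix.one_apply, companion, smul_eq_mul]
  have hLN : L * N = M' := by
    ext ⟨i, a⟩ ⟨j, b⟩
    by_cases hi : (i : ℕ) = n
    · rw [Matrix.mul_apply, Fintype.sum_prod_type]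
      simp only [hL, hM', Matrix.of_apply, hi, if_true]
      have inner : ∀ k : Fin (n+1),
          (∑ c : Fin d, B (k : ℕ) a c * N (k, c) (j, b))
            = (if k = j then lam * B (j : ℕ) a b else 0)
              - (if (k : ℕ) = n then T j a b else 0)
              - (if (j : ℕ) = (k : ℕ) + 1 then B (k : ℕ) a b else 0) := by
        intro k
        have expand : ∀ c : Fin d, B (k : ℕ) a c * N (k, c) (j, b)
            = (if k = j then lam * (B (k:ℕ) a c * (if c = b then 1 else 0)) else 0)
              - (if (k : ℕ) = n then B (k:ℕ) a c * T j c b else 0)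
              - (if ¬((k:ℕ) = n) ∧ (j : ℕ) = (k : ℕ) + 1
                  then B (k:ℕ) a c * (if c = b then (1:ℂ) else 0) else 0) := by
          intro c
          rw [hNval]
          have hx : (if (k, c) = (j, b) then (1:ℂ) else 0)
              = (if k = j then 1 else 0) * (if c = b then 1 else 0) := by
            by_cases h1 : k = j <;> by_cases h2 : c = b <;>
              simp [h1, h2, Prod.ext_iff]
          have hy : (if (k:ℕ) + 1 = n + 1 then T j c b
                else if (j:ℕ) = (k:ℕ) + 1 then (if c = b then (1:ℂ) else 0) else 0)
              = (if (k:ℕ) = n then T j c b else 0)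
                + (if ¬((k:ℕ) = n) ∧ (j:ℕ) = (k:ℕ) + 1
                    then (if c = b then (1:ℂ) else 0) else 0) := by
            by_cases h2 : (k:ℕ) = n
            · simp [h2]
            · simp [h2, Nat.succ_inj]
          rw [hx, hy]
          split_ifs <;> ring
        rw [Finset.sum_congr rfl fun c _ => expand c]
        rw [Finset.sum_sub_distrib, Finset.sum_sub_distrib]
        congr 1
        · congr 1
          · by_cases h1 : k = j
            · subst h1
              simp [mul_ite, mul_one, mul_zero, ← Finset.mul_sum]
            · simp [h1]
          · by_cases h2 : (k:ℕ) = n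
            · simp only [if_pos h2]
              have hBc : ∀ c : Fin d, B (k:ℕ) a c * T j c b
                  = (if a = c then 1 else 0) * T j c b := by
                intro c; rw [h2, hBn]
              rw [Finset.sum_congr rfl fun c _ => hBc c]
              rw [Finset.sum_eq_single a]
              · simp
              · intro c _ hc; rw [if_neg (Ne.symm hc), zero_mul]
              · simp
            · simp [h2]
        · by_cases h2 : (k:ℕ) = n
          · have h3 : ¬ (j : ℕ) = n + 1 := by have := j.isLt; omega
            simp [h2, h3]
          · by_cases h3 : (j : ℕ) = (k : ℕ) + 1
            · rw [if_pos h3]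
              rw [Finset.sum_congr rfl (fun c _ => if_pos (⟨h2, h3⟩ : ¬((k:ℕ) = n) ∧ (j:ℕ) = (k:ℕ) + 1))]
              rw [Finset.sum_eq_single b]
              · simp
              · intro c _ hc; rw [if_neg hc, mul_zero]
              · simp
            · simp [h2, h3]
      rw [Finset.sum_congr rfl fun k _ => inner k]
      rw [Finset.sum_sub_distrib, Finset.sum_sub_distrib]
      have s1 : ∑ k : Fin (n+1), (if k = j then lam * B (j : ℕ) a b else 0)
          = lam * B (j : ℕ) a b := by
        rw [Finset.sum_ite_eq' Finset.univ j fun _ => lam * B (j : ℕ) a b]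
        simp
      have s2 : ∑ k : Fin (n+1), (if (k : ℕ) = n then T j a b else 0) = T j a b := by
        rw [Finset.sum_eq_single (Fin.last n)]
        · simp
        · intro k _ hk
          exact if_neg (fun h => hk (Fin.val_injective (by simpa using h)))
        · simp
      rw [s1, s2]
      by_cases hj0 : (j : ℕ) = 0
      · have hj : j = 0 := Fin.ext hj0
        rw [if_pos hj0]
        have s3 : ∑ k : Fin (n+1), (if (j : ℕ) = (k : ℕ) + 1 then B (k : ℕ) a b else 0)
            = 0 := by
          apply Finset.sum_eq_zero
          intro k _
          rw [if_neg (by omega)]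
        rw [s3, sub_zero, hj]
        exact hD0 a b
      · rw [if_neg hj0]
        have hjpos : 0 < (j : ℕ) := Nat.pos_of_ne_zero hj0
        have s3 : ∑ k : Fin (n+1), (if (j : ℕ) = (k : ℕ) + 1 then B (k : ℕ) a b else 0)
            = B ((j : ℕ) - 1) a b := by
          rw [Finset.sum_eq_single (⟨(j:ℕ) - 1, by have := j.isLt; omega⟩ : Fin (n+1))]
          · rw [if_pos (show (j:ℕ) = (j:ℕ) - 1 + 1 by omega)]
          · intro k _ hk
            have hk' : (k:ℕ) ≠ (j:ℕ) - 1 := fun h => hk (Fin.ext h)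
            exact if_neg (fun h => hk' (by omega))
          · simp
        rw [s3]
        exact hstep j a b hjpos
    · rw [Matrix.mul_apply]
      rw [Finset.sum_eq_single ((i, a) : Fin (n+1) × Fin d)]
      · simp [hL, hM', hi]
      · intro y _ hy
        simp [hL, hi, Ne.symm hy]
      · simp
  have hdetL : L.det = 1 := by
    rw [← Matrix.det_transpose]
    have hbt : Lᵀ.BlockTriangular Prod.fst := by
      intro x y hxy
      have hxy' : (y.1 : ℕ) < (x.1 : ℕ) := hxy
      simp only [Matrix.transpose_apply, hL, Matrix.of_apply]
      rw [if_neg (by have := x.1.isLt; omega), if_neg]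
      intro h
      rw [h] at hxy'
      omega
    rw [hbt.det_fintype]
    have hblock : ∀ i : Fin (n+1), (Lᵀ.toSquareBlock Prod.fst i).det = 1 := by
      intro i
      have heq : Lᵀ.toSquareBlock Prod.fst i = 1 := by
        ext x y
        have hx : x.1.1 = i := x.2
        have hy : y.1.1 = i := y.2
        simp only [Matrix.toSquareBlock_def, Matrix.of_apply, Matrix.transpose_apply, hL]
        by_cases hin : (i : ℕ) = n
        · rw [if_pos (by rw [hy, hin]), show ((x.1.1 : Fin (n+1)) : ℕ) = n by rw [hx, hin],
            hBn, Matrix.one_apply]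
          by_cases h : x = y
          · simp [h]
          · rw [if_neg h, if_neg (fun hc => h (Subtype.ext (Prod.ext (by rw [hx, hy]) hc.symm)))]
        · rw [if_neg (by rw [hy]; exact hin), Matrix.one_apply]
          by_cases h : x = y
          · simp [h]
          · rw [if_neg (fun hc => h (Subtype.ext hc.symm)), if_neg h]
      rw [heq, Matrix.det_one]
    simp [hblock]
  -- the cyclic permutation of block rows
  set τ : Equiv.Perm (Fin (n+1) × Fin d) :=
    Equiv.prodCongrLeft (fun _ : Fin d => (finRotate (n+1)).symm) with hτ
  have hρ : ∀ y : Fin (n+1), (((finRotate (n+1)).symm y : Fin (n+1)) : ℕ)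
      = if (y : ℕ) = 0 then n else (y : ℕ) - 1 := by
    intro y
    have h1 : finRotate (n+1) ((finRotate (n+1)).symm y) = y := Equiv.apply_symm_apply _ _
    rw [finRotate_succ_apply] at h1
    have h2 : (((finRotate (n+1)).symm y + 1 : Fin (n+1)) : ℕ) = (y : ℕ) := by rw [h1]
    rw [Fin.val_add_one] at h2
    by_cases hml : (finRotate (n+1)).symm y = Fin.last n
    · rw [if_pos hml] at h2
      rw [if_pos h2.symm, hml, Fin.val_last]
    · rw [if_neg hml] at h2
      rw [if_neg (by omega)]
      omega
  have hτapp : ∀ x : Fin (n+1) × Fin d, τ x = ((finRotate (n+1)).symm x.1, x.2) := by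
    intro x
    rcases x with ⟨x1, x2⟩
    simp [hτ, Equiv.prodCongrLeft_apply]
  have hbt2 : ((M'.submatrix τ id)ᵀ).BlockTriangular Prod.fst := by
    intro u v huv
    have huv' : (v.1 : ℕ) < (u.1 : ℕ) := huv
    simp only [Matrix.transpose_apply, Matrix.submatrix_apply, id_eq, hτapp]
    have hv := hρ v.1
    simp only [hM', Matrix.of_apply]
    by_cases h0 : (v.1 : ℕ) = 0
    · rw [if_pos (by rw [hv, if_pos h0]), if_neg (by omega)]
    · rw [if_neg (by rw [hv, if_neg h0]; have := v.1.isLt; omega)]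
      rw [hNval]
      rw [if_neg (by
        intro h
        have := congrArg (fun z : Fin (n+1) × Fin d => (z.1 : ℕ)) h
        simp only at this
        rw [hv, if_neg h0] at this
        omega)]
      rw [if_neg (by rw [hv, if_neg h0]; have := v.1.isLt; omega)]
      rw [if_neg (by rw [hv, if_neg h0]; omega)]
      ring
  have hcard : ∀ i : Fin (n+1), Fintype.card {x : Fin (n+1) × Fin d // x.1 = i} = d := by
    intro i
    rw [Fintype.card_congr (blockEquiv i), Fintype.card_fin]
  have hblock2 : ∀ i : Fin (n+1), (((M'.submatrix τ id)ᵀ).toSquareBlock Prod.fst i).det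
      = if (i : ℕ) = 0 then D.det else (-1 : ℂ) ^ d := by
    intro i
    by_cases h0 : (i : ℕ) = 0
    · rw [if_pos h0, ← Matrix.det_transpose D,
        ← Matrix.det_submatrix_equiv_self (blockEquiv i) Dᵀ]
      congr 1
      ext x y
      have hx : x.1.1 = i := x.2
      have hy : y.1.1 = i := y.2
      simp only [Matrix.toSquareBlock_def, Matrix.of_apply, Matrix.transpose_apply,
        Matrix.submatrix_apply, id_eq, hτapp, hM']
      rw [if_pos (by rw [hρ, hy, h0]; simp), if_pos (by rw [hx]; exact h0)]
      simp [blockEquiv]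
    · rw [if_neg h0]
      have hblk : ((M'.submatrix τ id)ᵀ).toSquareBlock Prod.fst i
          = (-(1 : Matrix (Fin d) (Fin d) ℂ)).submatrix (blockEquiv i) (blockEquiv i) := by
        ext x y
        have hx : x.1.1 = i := x.2
        have hy : y.1.1 = i := y.2
        simp only [Matrix.toSquareBlock_def, Matrix.of_apply, Matrix.transpose_apply,
          Matrix.submatrix_apply, id_eq, hτapp, hM']
        have hρi : (((finRotate (n+1)).symm y.1.1 : Fin (n+1)) : ℕ) = (i : ℕ) - 1 := by
          rw [hρ, hy, if_neg h0]
        rw [if_neg (by rw [hρi]; have := i.isLt; omega)]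
        rw [hNval]
        rw [if_neg (by
          intro h
          have := congrArg (fun z : Fin (n+1) × Fin d => (z.1 : ℕ)) h
          simp only at this
          rw [hρi, hx] at this
          omega)]
        rw [if_neg (by rw [hρi]; have := i.isLt; omega)]
        rw [if_pos (by rw [hρi, hx]; omega)]
        simp only [blockEquiv, Equiv.coe_fn_mk, Matrix.submatrix_apply, Matrix.neg_apply,
          Matrix.one_apply]
        by_cases h : y.1.2 = x.1.2
        · rw [if_pos h, if_pos h.symm]; ring
        · rw [if_neg h, if_neg (Ne.symm h)]; ring
      rw [hblk, Matrix.det_submatrix_equiv_self, Matrix.det_neg, Matrix.det_one,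
        Fintype.card_fin, mul_one]
  have hdetM'' : (M'.submatrix τ id).det = D.det * ((-1 : ℂ) ^ d) ^ n := by
    rw [← Matrix.det_transpose, hbt2.det_fintype]
    rw [Finset.prod_congr rfl fun i _ => hblock2 i]
    rw [Fin.prod_univ_succ]
    rw [if_pos (by simp)]
    congr 1
    rw [Finset.prod_congr rfl (fun i _ => by
      rw [if_neg (by simp [Fin.val_succ])] : ∀ i ∈ Finset.univ,
        (if ((Fin.succ i : Fin (n+1)) : ℕ) = 0 then D.det else (-1:ℂ)^d) = (-1:ℂ)^d)]
    rw [Finset.prod_const, Finset.card_univ, Fintype.card_fin]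
  have hsign : ((Equiv.Perm.sign τ : ℤ) : ℂ) = ((-1 : ℂ) ^ n) ^ d := by
    have h1 : Equiv.Perm.sign τ = ((-1 : ℤˣ) ^ n) ^ d := by
      rw [hτ]
      have : (fun _ : Fin d => (finRotate (n+1)).symm)
          = fun _ : Fin d => (finRotate (n+1))⁻¹ := rfl
      rw [this]
      rw [Equiv.Perm.sign_prodCongrLeft]
      simp [Equiv.Perm.sign_inv, sign_finRotate]
    rw [h1]
    push_cast
    ring
  have hperm := Matrix.det_permute τ M'
  -- assemble
  have hMdet : M'.det = D.det := by
    have hs2 : (((Equiv.Perm.sign τ : ℤ) : ℂ)) * (((Equiv.Perm.sign τ : ℤ) : ℂ)) = 1 := by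
      rw [hsign, ← mul_pow, ← mul_pow, neg_one_mul, neg_neg, one_pow, one_pow]
    have : (((Equiv.Perm.sign τ : ℤ) : ℂ)) * (M'.submatrix τ id).det = M'.det := by
      rw [hperm, ← mul_assoc, hs2, one_mul]
    rw [← this, hdetM'', hsign]
    have : ((-1 : ℂ) ^ n) ^ d * ((-1 : ℂ) ^ d) ^ n = 1 := by
      rw [← pow_mul, ← pow_mul, ← pow_add,
        show n * d + d * n = 2 * (n * d) by ring, pow_mul, neg_one_sq, one_pow]
    rw [← mul_assoc, mul_comm (((-1:ℂ)^n)^d) D.det, mul_assoc, this, mul_one]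
  calc N.det = L.det * N.det := by rw [hdetL, one_mul]
    _ = (L * N).det := (Matrix.det_mul L N).symm
    _ = M'.det := by rw [hLN]
    _ = D.det := hMdet

end Stmt5Aux

theorem stmt_5 {p d : ℕ} (C : Fin p → Matrix (Fin d) (Fin d) ℂ)
    (Q : Matrix (Fin d) (Fin d) ℂ) (hQ : IsUnit Q)
    (hupper : ∀ k : Fin p, ∀ i j : Fin d, j < i → (Q⁻¹ * C k * Q) i j = 0)
    (lam : ℂ) :
    (companion C - lam • 1).det =
      (-1 : ℂ) ^ (p * d) *
        ∏ j : Fin d,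
          (lam ^ p - ∑ k : Fin p, lam ^ (k : ℕ) * (Q⁻¹ * C k * Q) j j) := by
  have hQd : IsUnit Q.det := (Matrix.isUnit_iff_isUnit_det Q).mp hQ
  have hQi : Q⁻¹ * Q = 1 := Matrix.nonsing_inv_mul Q hQd
  set T : Fin p → Matrix (Fin d) (Fin d) ℂ := fun k => Q⁻¹ * C k * Q with hT
  -- the d × d matrix whose determinant appears
  set D : Matrix (Fin d) (Fin d) ℂ :=
    lam ^ p • (1 : Matrix (Fin d) (Fin d) ℂ) - ∑ k : Fin p, lam ^ (k : ℕ) • T k with hD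
  -- Step 4 : D is upper triangular
  have hDdet : D.det = ∏ j : Fin d, (lam ^ p - ∑ k : Fin p, lam ^ (k : ℕ) * T k j j) := by
    rw [Matrix.det_of_upperTriangular]
    · apply Finset.prod_congr rfl
      intro j _
      simp [hD, Matrix.sum_apply, Matrix.one_apply]
    · intro i j hji
      simp only [hD, Matrix.sub_apply, Matrix.smul_apply, Matrix.sum_apply,
        Matrix.one_apply, smul_eq_mul]
      have hij : i ≠ j := ne_of_gt hji
      rw [if_neg hij, mul_zero, zero_sub, neg_eq_zero]
      exact Finset.sum_eq_zero fun k _ => by rw [show T k i j = 0 from hupper k i j hji, mul_zero]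
  -- Step 1 : conjugation
  have hstep1 : (companion C - lam • 1).det = (companion T - lam • 1).det := by
    have hconj : ((1 : Matrix (Fin p) (Fin p) ℂ) ⊗ₖ Q⁻¹) * (companion C - lam • 1) *
        ((1 : Matrix (Fin p) (Fin p) ℂ) ⊗ₖ Q) = companion T - lam • 1 := by
      rw [Matrix.mul_sub, Matrix.sub_mul, Stmt5Aux.conj_companion C Q hQi]
      congr 1
      rw [Matrix.mul_smul, Matrix.mul_one, Matrix.smul_mul, ← mul_kronecker_mul,
        one_mul, hQi, one_kronecker_one]
    have hdet1 : ((1 : Matrix (Fin p) (Fin p) ℂ) ⊗ₖ Q⁻¹).det *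
        ((1 : Matrix (Fin p) (Fin p) ℂ) ⊗ₖ Q).det = 1 := by
      rw [← Matrix.det_mul, ← mul_kronecker_mul, one_mul, hQi, one_kronecker_one,
        Matrix.det_one]
    have h2 := congrArg Matrix.det hconj
    rw [Matrix.det_mul, Matrix.det_mul] at h2
    calc (companion C - lam • 1).det
        = ((1 : Matrix (Fin p) (Fin p) ℂ) ⊗ₖ Q⁻¹).det *
            ((1 : Matrix (Fin p) (Fin p) ℂ) ⊗ₖ Q).det * (companion C - lam • 1).det := by
          rw [hdet1, one_mul]
      _ = (companion T - lam • 1).det := by rw [← h2]; ring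
  rw [hstep1]
  -- Step 2 : pull out the sign
  have hstep2 : (companion T - lam • 1).det =
      (-1 : ℂ) ^ (p * d) * (lam • 1 - companion T).det := by
    have : companion T - lam • (1 : Matrix (Fin p × Fin d) (Fin p × Fin d) ℂ)
        = -(lam • 1 - companion T) := (neg_sub _ _).symm
    rw [this, Matrix.det_neg, Fintype.card_prod, Fintype.card_fin, Fintype.card_fin]
  rw [hstep2, ← hDdet]
  congr 1
  -- Step 3 : the companion determinant
  cases p with
  | zero =>
      have : IsEmpty (Fin 0 × Fin d) := by infer_instance
      rw [Matrix.det_isEmpty]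
      rw [hD]
      simp
  | succ n => exact Stmt5Aux.det_aux lam T
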